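/- Let p ⊑_p2p q. For every s ∈ Act*, if p ⇓p2p s and q ⟹^s, then p ⟹^s. -/

import Mathlib

namespace MTP

/-- Processes of infinitary CCS with success.
`pre none p` is `τ.p`, `pre (some a) p` is `a.p`.
`sum f` is a countable sum `Σ_{i∈I} p_i` where `I = {n | f n ≠ none}`. -/
inductive Proc (Act : Type) (Const : Type) : Type where
  | one : Proc Act Const
  | const : Const → Proc Act Const
  | pre : Option Act → Proc Act Const → Proc Act Const
  | sum : (ℕ → Option (Proc Act Const)) → Proc Act Const

namespace Proc
/-- The empty sum `0`. -/
def nil {Act Const : Type} : Proc Act Const := .sum fun _ => none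
/-- Binary external sum `p + q`. -/
def ext {Act Const : Type} (p q : Proc Act Const) : Proc Act Const :=
  .sum fun n => if n = 0 then some p else if n = 1 then some q else none
end Proc

/-- Labels: visible actions, τ, and the success action ✓. -/
inductive Label (Act : Type) : Type where
  | act : Act → Label Act
  | tau : Label Act
  | ok : Label Act

/-- A CCS signature: an involutive complementation on actions, together with
a definition for every constant. -/
structure CCS (Act : Type) (Const : Type) : Type where
  co : Act → Act
  co_invol : ∀ a, co (co a) = a
  defn : Const → Proc Act Const

variable {Act Const : Type}

/-- The transition relation of infinitary CCS with success. -/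
inductive Step (S : CCS Act Const) : Proc Act Const → Label Act → Proc Act Const → Prop where
  | one : Step S .one .ok .nil
  | preAct (a : Act) (p : Proc Act Const) : Step S (.pre (some a) p) (.act a) p
  | preTau (p : Proc Act Const) : Step S (.pre none p) .tau p
  | sum {f : ℕ → Option (Proc Act Const)} {i : ℕ} {p q : Proc Act Const} {l : Label Act} :
      f i = some p → Step S p l q → Step S (.sum f) l q
  | const {A : Const} {l : Label Act} {q : Proc Act Const} :
      Step S (S.defn A) l q → Step S (.const A) l q

/-- `p` can report success. -/
def CanOk (S : CCS Act Const) (p : Proc Act Const) : Prop := ∃ q, Step S p .ok q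

/-- `p` has no τ-transition. -/
def Stable (S : CCS Act Const) (p : Proc Act Const) : Prop := ¬ ∃ q, Step S p .tau q

/-- τ-transitions of a parallel composition `p ∥ r` (server component first). -/
inductive ParTau (S : CCS Act Const) :
    Proc Act Const × Proc Act Const → Proc Act Const × Proc Act Const → Prop where
  | left {p p' r : Proc Act Const} : Step S p .tau p' → ParTau S (p, r) (p', r)
  | right {p r r' : Proc Act Const} : Step S r .tau r' → ParTau S (p, r) (p, r')
  | sync {p p' r r' : Proc Act Const} {a : Act} :
      Step S p (.act a) p' → Step S r (.act (S.co a)) r' → ParTau S (p, r) (p', r')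

/-- A state of a composition is stuck if it has no τ-transition. -/
def StateStuck (S : CCS Act Const) (st : Proc Act Const × Proc Act Const) : Prop :=
  ¬ ∃ t, ParTau S st t

/-- `ρ` encodes a maximal computation: at each stage either a real τ-step is taken, or the
state is stuck and stutters forever (encoding a finite maximal computation). -/
def MaxComp (S : CCS Act Const) (ρ : ℕ → Proc Act Const × Proc Act Const) : Prop :=
  ∀ k, ParTau S (ρ k) (ρ (k + 1)) ∨ (StateStuck S (ρ k) ∧ ρ (k + 1) = ρ k)

/-- `p Must r`: every maximal computation of `p ∥ r` is client-successful. -/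
def Must (S : CCS Act Const) (p r : Proc Act Const) : Prop :=
  ∀ ρ : ℕ → Proc Act Const × Proc Act Const,
    ρ 0 = (p, r) → MaxComp S ρ → ∃ k, CanOk S (ρ k).2

/-- `p MustSC r`: every maximal computation of `p ∥ r` is successful (both components
eventually can report success). -/
def MustSC (S : CCS Act Const) (p r : Proc Act Const) : Prop :=
  ∀ ρ : ℕ → Proc Act Const × Proc Act Const,
    ρ 0 = (p, r) → MaxComp S ρ → (∃ k, CanOk S (ρ k).2) ∧ (∃ l, CanOk S (ρ l).1)

/-- The server testing preorder `p ⊑_svr q`. -/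
def svrLe (S : CCS Act Const) (p q : Proc Act Const) : Prop :=
  ∀ r, Must S p r → Must S q r

/-- The client testing preorder `r₁ ⊑_clt r₂`. -/
def cltLe (S : CCS Act Const) (r₁ r₂ : Proc Act Const) : Prop :=
  ∀ p, Must S p r₁ → Must S p r₂

/-- The peer testing preorder `p ⊑_p2p q`. -/
def p2pLe (S : CCS Act Const) (p q : Proc Act Const) : Prop :=
  ∀ r, MustSC S p r → MustSC S q r

/-- Weak transition `p ⟹^s q` for finite traces `s ∈ Act*`. -/
inductive Weak (S : CCS Act Const) : Proc Act Const → List Act → Proc Act Const → Prop where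
  | refl (p : Proc Act Const) : Weak S p [] p
  | tau {p p' q : Proc Act Const} {s : List Act} :
      Step S p .tau p' → Weak S p' s q → Weak S p s q
  | act {p p' q : Proc Act Const} {a : Act} {s : List Act} :
      Step S p (.act a) p' → Weak S p' s q → Weak S p (a :: s) q

/-- Unsuccessful weak transition `p ⟹̸✓^s q`: as `Weak` but no state passed through
(including the end points) can report success. -/
inductive UWeak (S : CCS Act Const) : Proc Act Const → List Act → Proc Act Const → Prop where
  | refl {p : Proc Act Const} : ¬ CanOk S p → UWeak S p [] p
  | tau {p p' q : Proc Act Const} {s : List Act} :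
      ¬ CanOk S p → Step S p .tau p' → UWeak S p' s q → UWeak S p s q
  | act {p p' q : Proc Act Const} {a : Act} {s : List Act} :
      ¬ CanOk S p → Step S p (.act a) p' → UWeak S p' s q → UWeak S p (a :: s) q

/-- View `Option Act` (`none` = τ) as a label. -/
def optLabel : Option Act → Label Act
  | some a => .act a
  | none => .tau

/-- The length-`n` prefix of an infinite trace `u ∈ Act^∞`. -/
def prefixList (u : ℕ → Act) (n : ℕ) : List Act := List.ofFn fun i : Fin n => u i.1

/-- Infinite weak transition `p ⟹^u` for `u ∈ Act^∞`. -/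
def InfWeak (S : CCS Act Const) (p : Proc Act Const) (u : ℕ → Act) : Prop :=
  ∃ (ρ : ℕ → Proc Act Const) (ℓ : ℕ → Option Act),
    ρ 0 = p ∧ (∀ k, Step S (ρ k) (optLabel (ℓ k)) (ρ (k + 1))) ∧
    ∀ n, ∃ k, (List.range k).filterMap ℓ = prefixList u n

/-- Infinite unsuccessful weak transition `p ⟹̸✓^u` for `u ∈ Act^∞`. -/
def InfUWeak (S : CCS Act Const) (p : Proc Act Const) (u : ℕ → Act) : Prop :=
  ∃ (ρ : ℕ → Proc Act Const) (ℓ : ℕ → Option Act),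
    ρ 0 = p ∧ (∀ k, Step S (ρ k) (optLabel (ℓ k)) (ρ (k + 1))) ∧
    (∀ k, ¬ CanOk S (ρ k)) ∧
    ∀ n, ∃ k, (List.range k).filterMap ℓ = prefixList u n

/-- `p ⇓`: no infinite sequence of τ-transitions from `p`. -/
def Conv (S : CCS Act Const) (p : Proc Act Const) : Prop :=
  ¬ ∃ ρ : ℕ → Proc Act Const, ρ 0 = p ∧ ∀ k, Step S (ρ k) .tau (ρ (k + 1))

/-- `p after s`. -/
def after (S : CCS Act Const) (p : Proc Act Const) (s : List Act) : Set (Proc Act Const) :=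
  {q | Weak S p s q}

/-- `p afterU s`: residuals after unsuccessful traces. -/
def afterU (S : CCS Act Const) (p : Proc Act Const) (s : List Act) : Set (Proc Act Const) :=
  {q | UWeak S p s q}

-- `⊕X = Σ_{x∈X} τ.x` for a nonempty countable set `X` (junk value otherwise).
open scoped Classical in
noncomputable def bigOplus (X : Set (Proc Act Const)) : Proc Act Const :=
  if h : ∃ f : ℕ → Proc Act Const, Set.range f = X then
    Proc.sum fun n => some (.pre none (h.choose n))
  else Proc.nil

/-- The ready set `S(q)`. -/
def ready (S : CCS Act Const) (q : Proc Act Const) : Set Act :=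
  {a | ∃ q', Step S q (.act a) q'}

/-- The acceptance set `A(p, s)`. -/
def acc (S : CCS Act Const) (p : Proc Act Const) (s : List Act) : Set (Set Act) :=
  {A | ∃ q, Weak S p s q ∧ Stable S q ∧ A = ready S q}

/-- The unsuccessful acceptance set `A✗(p, s)`. -/
def accU (S : CCS Act Const) (p : Proc Act Const) (s : List Act) : Set (Set Act) :=
  {A | ∃ q, UWeak S p s q ∧ Stable S q ∧ A = ready S q}

/-- The usable clients. -/
def Uclt (S : CCS Act Const) : Set (Proc Act Const) := {r | ∃ p, Must S p r}

/-- The usable servers. -/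
def Usvr (S : CCS Act Const) : Set (Proc Act Const) := {p | ∃ r, Must S p r}

/-- Client usability along an unsuccessful trace: `r ⇓U s`. -/
def usbU (S : CCS Act Const) : Proc Act Const → List Act → Prop
  | r, [] => r ∈ Uclt S
  | r, a :: s => r ∈ Uclt S ∧ ((∃ q, UWeak S r [a] q) → usbU S (bigOplus (afterU S r [a])) s)

/-- Client usability along an infinite trace. -/
def usbUInf (S : CCS Act Const) (r : Proc Act Const) (u : ℕ → Act) : Prop :=
  ∀ n, usbU S r (prefixList u n)

/-- Usable actions of a client after `s`: `uaU(r, s)`. -/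
def uaU (S : CCS Act Const) (r : Proc Act Const) (s : List Act) : Set Act :=
  {a | (∃ q, UWeak S r (s ++ [a]) q) → usbU S r (s ++ [a])}

/-- Convergence along a trace: `p ⇓ s`. -/
def convAlong (S : CCS Act Const) : Proc Act Const → List Act → Prop
  | p, [] => Conv S p
  | p, a :: s => Conv S p ∧ ((∃ q, Weak S p [a] q) → convAlong S (bigOplus (after S p [a])) s)

/-- Server usability along a trace: `p ⇓U' s`. -/
def usbS (S : CCS Act Const) : Proc Act Const → List Act → Prop
  | p, [] => p ∈ Usvr S
  | p, a :: s => p ∈ Usvr S ∧ ((∃ q, Weak S p [a] q) → usbS S (bigOplus (after S p [a])) s)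

/-- Server convergence `p ⇓svr s`. -/
def convS (S : CCS Act Const) (p : Proc Act Const) (s : List Act) : Prop :=
  convAlong S p s ∧ usbS S p s

/-- Server convergence along an infinite trace. -/
def convSInf (S : CCS Act Const) (p : Proc Act Const) (u : ℕ → Act) : Prop :=
  ∀ n, convS S p (prefixList u n)

/-- Usable actions of a server after `s`: `uaS(p, s)`. -/
def uaS (S : CCS Act Const) (p : Proc Act Const) (s : List Act) : Set Act :=
  {a | (∃ q, Weak S p s q) → usbS S p (s ++ [a])}

/-- Peer convergence `p ⇓p2p s`. -/
def convP (S : CCS Act Const) (p : Proc Act Const) (s : List Act) : Prop :=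
  convAlong S p s ∧ usbU S p s

/-- Peer convergence along an infinite trace. -/
def convPInf (S : CCS Act Const) (p : Proc Act Const) (u : ℕ → Act) : Prop :=
  ∀ n, convP S p (prefixList u n)

/-- The semantic client preorder `r₁ ≼_clt r₂`. -/
def semClt (S : CCS Act Const) (r₁ r₂ : Proc Act Const) : Prop :=
  (∀ s : List Act, usbU S r₁ s →
    usbU S r₂ s ∧ ∀ B ∈ accU S r₂ s, ∃ A ∈ accU S r₁ s, A ∩ uaU S r₁ s ⊆ B) ∧
  (∀ s : List Act, usbU S r₁ s → (∃ q, UWeak S r₂ s q) → ∃ q, UWeak S r₁ s q) ∧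
  (∀ u : ℕ → Act, usbUInf S r₁ u → InfUWeak S r₂ u → InfUWeak S r₁ u)

/-- The semantic server preorder `p ≼_svr q`. -/
def semSvr (S : CCS Act Const) (p q : Proc Act Const) : Prop :=
  (∀ s : List Act, convS S p s →
    convS S q s ∧ ∀ B ∈ acc S q s, ∃ A ∈ acc S p s, A ∩ uaS S p s ⊆ B) ∧
  (∀ s : List Act, convS S p s → (∃ q', Weak S q s q') → ∃ p', Weak S p s p') ∧
  (∀ u : ℕ → Act, convSInf S p u → InfWeak S q u → InfWeak S p u)

/-- The auxiliary semantic peer relation `p ≼'_p2p q`. -/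
def semP2pAux (S : CCS Act Const) (p q : Proc Act Const) : Prop :=
  (∀ s : List Act, convP S p s →
    convAlong S q s ∧ ∀ B ∈ acc S q s, ∃ A ∈ acc S p s, A ∩ uaU S p s ⊆ B) ∧
  (∀ s : List Act, convP S p s → (∃ q', Weak S q s q') → ∃ p', Weak S p s p') ∧
  (∀ u : ℕ → Act, convPInf S p u → InfWeak S q u → InfWeak S p u)

/-- The semantic peer preorder `p ≼_p2p q`. -/
def semP2p (S : CCS Act Const) (p q : Proc Act Const) : Prop :=
  semClt S p q ∧ semP2pAux S p q

end MTP
namespace MTPProof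
open MTP

variable {Act Const : Type}

lemma nil_no_step {S : CCS Act Const} {l : Label Act} {q : Proc Act Const} :
    ¬ Step S Proc.nil l q := by
  intro h
  cases h with
  | sum hf _ => simp at hf

lemma step_ext_iff {S : CCS Act Const} {p q y : Proc Act Const} {l : Label Act} :
    Step S (Proc.ext p q) l y ↔ Step S p l y ∨ Step S q l y := by
  constructor
  · intro h
    cases h with
    | @sum f i pp qq ll hf hs =>
      by_cases h0 : i = 0
      · subst h0; simp at hf; subst hf; exact Or.inl hs
      · by_cases h1 : i = 1
        · subst h1; simp at hf; subst hf; exact Or.inr hs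
        · simp [h0, h1] at hf
  · intro h
    cases h with
    | inl h => exact Step.sum (f := fun n => if n = 0 then some p else if n = 1 then some q else none) (i := 0) (by simp) h
    | inr h => exact Step.sum (f := fun n => if n = 0 then some p else if n = 1 then some q else none) (i := 1) (by simp) h

lemma ext_inj {p q p' q' : Proc Act Const} (h : Proc.ext p q = Proc.ext p' q') :
    p = p' ∧ q = q' := by
  have hf : (fun n => if n = 0 then some p else if n = 1 then some q else none)
      = (fun n : ℕ => if n = 0 then some p' else if n = 1 then some q' else none) :=
    Proc.sum.inj h
  constructor
  · have := congrFun hf 0; simpa using this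
  · have := congrFun hf 1; simpa using this

noncomputable def dstep (S : CCS Act Const) :
    ℕ → Proc Act Const → Label Act → List ℕ → Option (Proc Act Const) :=
  Nat.rec (motive := fun _ => Proc Act Const → Label Act → List ℕ → Option (Proc Act Const))
    (fun _ _ _ => none)
    (fun _ ih p l ks =>
      match p, ks with
      | .one, [] => match l with | .ok => some .nil | _ => none
      | .pre μ r, [] => @ite _ (optLabel μ = l) (Classical.propDecidable _) (some r) none
      | .const A, ks => ih (S.defn A) l ks
      | .sum g, i :: ks' => (g i).bind fun r => ih r l ks'
      | _, _ => none)

lemma dstep_complete {S : CCS Act Const} {p : Proc Act Const} {l : Label Act} {q : Proc Act Const}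
    (h : Step S p l q) : ∃ f ks, dstep S f p l ks = some q := by
  induction h with
  | one => exact ⟨1, [], rfl⟩
  | preAct a r =>
    refine ⟨1, [], ?_⟩
    show @ite _ (optLabel (some a) = Label.act a) (Classical.propDecidable _) (some r) none = some r
    exact if_pos rfl
  | preTau r =>
    refine ⟨1, [], ?_⟩
    show @ite _ (optLabel (none : Option Act) = Label.tau) (Classical.propDecidable _) (some r) none = some r
    exact if_pos rfl
  | @sum f i pp qq ll hf _ ih =>
    obtain ⟨fu, ks, hd⟩ := ih
    refine ⟨fu + 1, i :: ks, ?_⟩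
    show ((f i).bind fun r => dstep S fu r ll ks) = some qq
    rw [hf]; exact hd
  | @const A ll qq _ ih =>
    obtain ⟨fu, ks, hd⟩ := ih
    exact ⟨fu + 1, ks, hd⟩

lemma step_countable (S : CCS Act Const) (p : Proc Act Const) (l : Label Act) :
    Set.Countable {q | Step S p l q} := by
  have hsub : {q | Step S p l q} ⊆
      ⋃ fk : ℕ × List ℕ, {q | dstep S fk.1 p l fk.2 = some q} := by
    intro q hq
    obtain ⟨f, ks, hd⟩ := dstep_complete hq
    exact Set.mem_iUnion.2 ⟨(f, ks), hd⟩
  refine Set.Countable.mono hsub ?_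
  refine Set.countable_iUnion fun fk => ?_
  apply Set.Subsingleton.countable
  intro a ha b hb
  have : some a = some b := by rw [← ha, ← hb]
  exact Option.some_inj.1 this

end MTPProof
namespace MTPProof

open MTP

variable {Act Const : Type}

def tIter (S : CCS Act Const) (p : Proc Act Const) : ℕ → Set (Proc Act Const)
  | 0 => {p}
  | n+1 => ⋃ x ∈ tIter S p n, {y | Step S x .tau y}

def tclos (S : CCS Act Const) (p : Proc Act Const) : Set (Proc Act Const) :=
  ⋃ n, tIter S p n

lemma tIter_countable (S : CCS Act Const) (p : Proc Act Const) :
    ∀ n, (tIter S p n).Countable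
  | 0 => Set.countable_singleton p
  | n+1 => (tIter_countable S p n).biUnion fun x _ => step_countable S x .tau

lemma tclos_countable (S : CCS Act Const) (p : Proc Act Const) :
    (tclos S p).Countable :=
  Set.countable_iUnion (tIter_countable S p)

lemma mem_tclos_self (S : CCS Act Const) (p : Proc Act Const) : p ∈ tclos S p :=
  Set.mem_iUnion.2 ⟨0, rfl⟩

lemma tclos_step {S : CCS Act Const} {p x : Proc Act Const} (h : Step S p .tau x) :
    tclos S x ⊆ tclos S p := by
  have key : ∀ n, tIter S x n ⊆ tIter S p (n+1) := by
    intro n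
    induction n with
    | zero => intro y hy; cases hy; exact Set.mem_biUnion rfl h
    | succ n ih =>
      intro y hy
      obtain ⟨z, hz, hstep⟩ := Set.mem_iUnion₂.1 hy
      exact Set.mem_iUnion₂.2 ⟨z, ih hz, hstep⟩
  intro y hy
  obtain ⟨n, hn⟩ := Set.mem_iUnion.1 hy
  exact Set.mem_iUnion.2 ⟨n+1, key n hn⟩

lemma weak_nil_tclos {S : CCS Act Const} {p q : Proc Act Const} {s : List Act}
    (h : Weak S p s q) (hs : s = []) : q ∈ tclos S p := by
  induction h with
  | refl p => exact mem_tclos_self S p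
  | tau hstep _ ih => exact tclos_step hstep (ih hs)
  | act _ _ _ => exact absurd hs (by simp)

def wSet (S : CCS Act Const) : List Act → Proc Act Const → Set (Proc Act Const)
  | [], p => tclos S p
  | a :: t, p => ⋃ x ∈ tclos S p, ⋃ y ∈ {y | Step S x (.act a) y}, wSet S t y

lemma wSet_countable (S : CCS Act Const) :
    ∀ (t : List Act) (p : Proc Act Const), (wSet S t p).Countable
  | [], p => tclos_countable S p
  | a :: t, p =>
    (tclos_countable S p).biUnion fun x _ =>
      (step_countable S x (.act a)).biUnion fun y _ => wSet_countable S t y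

lemma wSet_step {S : CCS Act Const} {p x : Proc Act Const} (h : Step S p .tau x) :
    ∀ t, wSet S t x ⊆ wSet S t p := by
  intro t
  cases t with
  | nil => exact tclos_step h
  | cons a t =>
    intro y hy
    obtain ⟨z, hz, hrest⟩ := Set.mem_iUnion₂.1 hy
    exact Set.mem_iUnion₂.2 ⟨z, tclos_step h hz, hrest⟩

lemma weak_wSet {S : CCS Act Const} {p q : Proc Act Const} {s : List Act}
    (h : Weak S p s q) : q ∈ wSet S s p := by
  induction h with
  | refl p => exact mem_tclos_self S p
  | tau hstep _ ih => exact wSet_step hstep _ ih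
  | @act pp pp' qq a ss hstep _ ih =>
    exact Set.mem_iUnion₂.2 ⟨pp, mem_tclos_self S pp, Set.mem_iUnion₂.2 ⟨pp', hstep, ih⟩⟩

lemma after_countable (S : CCS Act Const) (p : Proc Act Const) (s : List Act) :
    (after S p s).Countable :=
  Set.Countable.mono (fun _ h => weak_wSet h) (wSet_countable S s p)

lemma uweak_weak {S : CCS Act Const} {p q : Proc Act Const} {s : List Act}
    (h : UWeak S p s q) : Weak S p s q := by
  induction h with
  | refl _ => exact Weak.refl _
  | tau _ hstep _ ih => exact Weak.tau hstep ih
  | act _ hstep _ ih => exact Weak.act hstep ih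

lemma afterU_countable (S : CCS Act Const) (p : Proc Act Const) (s : List Act) :
    (afterU S p s).Countable :=
  Set.Countable.mono (fun _ h => weak_wSet (uweak_weak h)) (wSet_countable S s p)

/- snoc lemmas -/
lemma weak_snoc_tau {S : CCS Act Const} {x y z : Proc Act Const} {s : List Act}
    (h : Weak S x s y) (hst : Step S y .tau z) : Weak S x s z := by
  induction h with
  | refl p => exact Weak.tau hst (Weak.refl z)
  | tau h1 _ ih => exact Weak.tau h1 (ih hst)
  | act h1 _ ih => exact Weak.act h1 (ih hst)

lemma weak_snoc_act {S : CCS Act Const} {x y z : Proc Act Const} {s : List Act} {a : Act}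
    (h : Weak S x s y) (hst : Step S y (.act a) z) : Weak S x (s ++ [a]) z := by
  induction h with
  | refl p => exact Weak.act hst (Weak.refl z)
  | tau h1 _ ih => exact Weak.tau h1 (ih hst)
  | act h1 _ ih => exact Weak.act h1 (ih hst)

lemma weak_trans {S : CCS Act Const} {x y z : Proc Act Const} {s t : List Act}
    (h : Weak S x s y) (h2 : Weak S y t z) : Weak S x (s ++ t) z := by
  induction h with
  | refl p => simpa using h2
  | tau h1 _ ih => exact Weak.tau h1 (ih h2)
  | act h1 _ ih => exact Weak.act h1 (ih h2)

lemma weak_nil_trans {S : CCS Act Const} {x y z : Proc Act Const} {t : List Act}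
    (h : Weak S x [] y) (h2 : Weak S y t z) : Weak S x t z := by
  have := weak_trans h h2; simpa using this

lemma uweak_snoc_tau {S : CCS Act Const} {x y z : Proc Act Const} {s : List Act}
    (h : UWeak S x s y) (hst : Step S y .tau z) (hnz : ¬ CanOk S z) : UWeak S x s z := by
  induction h with
  | refl hn => exact UWeak.tau hn hst (UWeak.refl hnz)
  | tau hn h1 _ ih => exact UWeak.tau hn h1 (ih hst)
  | act hn h1 _ ih => exact UWeak.act hn h1 (ih hst)

lemma uweak_snoc_act {S : CCS Act Const} {x y z : Proc Act Const} {s : List Act} {a : Act}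
    (h : UWeak S x s y) (hst : Step S y (.act a) z) (hnz : ¬ CanOk S z) :
    UWeak S x (s ++ [a]) z := by
  induction h with
  | refl hn => exact UWeak.act hn hst (UWeak.refl hnz)
  | tau hn h1 _ ih => exact UWeak.tau hn h1 (ih hst)
  | act hn h1 _ ih => exact UWeak.act hn h1 (ih hst)

/- convergence lemmas -/
lemma conv_step {S : CCS Act Const} {c x : Proc Act Const}
    (hc : Conv S c) (h : Step S c .tau x) : Conv S x := by
  intro ⟨σ, h0, hs⟩
  apply hc
  refine ⟨fun k => match k with | 0 => c | k+1 => σ k, rfl, ?_⟩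
  intro k
  cases k with
  | zero => exact show Step S c .tau (σ 0) from h0.symm ▸ h
  | succ k => exact hs k

lemma conv_weak_nil {S : CCS Act Const} {c p' : Proc Act Const} {s : List Act}
    (h : Weak S c s p') (hs : s = []) (hc : Conv S c) : Conv S p' := by
  induction h with
  | refl p => exact hc
  | tau h1 _ ih => exact ih hs (conv_step hc h1)
  | act _ _ _ => exact absurd hs (by simp)



end MTPProof
namespace MTPProof
open MTP
open scoped Classical

variable {Act Const : Type}

abbrev St (Act Const : Type) := Proc Act Const × Proc Act Const

/- swap lemmas -/
lemma parTau_swap {S : CCS Act Const} {st t : St Act Const}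
    (h : ParTau S st t) : ParTau S st.swap t.swap := by
  cases h with
  | left h => exact ParTau.right h
  | right h => exact ParTau.left h
  | @sync p p' r r' a h1 h2 =>
    refine ParTau.sync h2 ?_
    rw [S.co_invol]; exact h1

lemma stateStuck_swap {S : CCS Act Const} {st : St Act Const}
    (h : StateStuck S st) : StateStuck S st.swap := by
  intro ⟨t, ht⟩
  exact h ⟨t.swap, by simpa using parTau_swap ht⟩

lemma maxComp_swap {S : CCS Act Const} {ρ : ℕ → St Act Const}
    (h : MaxComp S ρ) : MaxComp S (fun k => (ρ k).swap) := by
  intro k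
  rcases h k with h' | ⟨hs, he⟩
  · exact Or.inl (parTau_swap h')
  · exact Or.inr ⟨stateStuck_swap hs, show Prod.swap (ρ (k+1)) = Prod.swap (ρ k) by rw [he]⟩

lemma maxComp_shift {S : CCS Act Const} {ρ : ℕ → St Act Const}
    (h : MaxComp S ρ) (i : ℕ) : MaxComp S (fun k => ρ (i + k)) := fun k => h (i + k)

/- cons computation -/
def consC (st : St Act Const) (σ : ℕ → St Act Const) : ℕ → St Act Const
  | 0 => st
  | k+1 => σ k

lemma consC_max {S : CCS Act Const} {st : St Act Const} {σ : ℕ → St Act Const}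
    (h0 : ParTau S st (σ 0)) (h : MaxComp S σ) : MaxComp S (consC st σ) := by
  intro k
  cases k with
  | zero => exact Or.inl h0
  | succ k => exact h k

/- maximal extension -/
noncomputable def extC (S : CCS Act Const) (st : St Act Const) : ℕ → St Act Const
  | 0 => st
  | k+1 =>
    if h : ∃ t, ParTau S (extC S st k) t then Classical.choose h else extC S st k

lemma extC_succ (S : CCS Act Const) (st : St Act Const) (k : ℕ) :
    extC S st (k+1) = if h : ∃ t, ParTau S (extC S st k) t then Classical.choose h
      else extC S st k := rfl

lemma extC_max (S : CCS Act Const) (st : St Act Const) : MaxComp S (extC S st) := by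
  intro k
  by_cases h : ∃ t, ParTau S (extC S st k) t
  · rw [extC_succ, dif_pos h]; exact Or.inl (Classical.choose_spec h)
  · exact Or.inr ⟨h, by rw [extC_succ, dif_neg h]⟩

lemma parTau_nil_snd {S : CCS Act Const} {st t : St Act Const}
    (h : ParTau S st t) (h2 : st.2 = Proc.nil) : t.2 = Proc.nil := by
  cases h with
  | left _ => exact h2
  | right hstep => simp only [] at h2; rw [h2] at hstep; exact absurd hstep nil_no_step
  | sync h1 hstep => simp only [] at h2; rw [h2] at hstep; exact absurd hstep nil_no_step

lemma extC_nil (S : CCS Act Const) (x : Proc Act Const) :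
    ∀ k, (extC S (x, Proc.nil) k).2 = Proc.nil := by
  intro k
  induction k with
  | zero => rfl
  | succ k ih =>
    rw [extC_succ]
    by_cases h : ∃ t, ParTau S (extC S (x, Proc.nil) k) t
    · rw [dif_pos h]
      exact parTau_nil_snd (Classical.choose_spec h) ih
    · rw [dif_neg h]; exact ih

/- bigOplus lemmas -/
lemma bigOplus_tau {S : CCS Act Const} {X : Set (Proc Act Const)} {x : Proc Act Const}
    (hc : X.Countable) (hx : x ∈ X) : Step S (bigOplus X) .tau x := by
  have hex : ∃ f : ℕ → Proc Act Const, Set.range f = X := by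
    obtain ⟨f, hf⟩ := Set.Countable.exists_eq_range hc ⟨x, hx⟩
    exact ⟨f, hf.symm⟩
  rw [bigOplus, dif_pos hex]
  have hsp := hex.choose_spec
  have : x ∈ Set.range hex.choose := by rw [hsp]; exact hx
  obtain ⟨n, hn⟩ := this
  refine Step.sum (i := n) rfl ?_
  rw [hn]; exact Step.preTau x

lemma bigOplus_noOk (S : CCS Act Const) (X : Set (Proc Act Const)) :
    ¬ CanOk S (bigOplus X) := by
  intro ⟨q, hq⟩
  rw [bigOplus] at hq
  by_cases hex : ∃ f : ℕ → Proc Act Const, Set.range f = X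
  · rw [dif_pos hex] at hq
    cases hq with
    | sum hf hs =>
      cases hf
      cases hs
  · rw [dif_neg hex] at hq
    exact nil_no_step hq

/- the test process -/
noncomputable def wOf (S : CCS Act Const) (b : Proc Act Const) : Proc Act Const :=
  if h : ∃ p', Must S p' b then Classical.choose h else Proc.nil

lemma wOf_spec {S : CCS Act Const} {b : Proc Act Const} (h : b ∈ Uclt S) :
    Must S (wOf S b) b := by
  have h' : ∃ p', Must S p' b := h
  rw [wOf, dif_pos h']
  exact Classical.choose_spec h'

noncomputable def gOf (S : CCS Act Const) (b : Proc Act Const) : Proc Act Const :=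
  Proc.ext Proc.one (Proc.pre none (wOf S b))

lemma gOf_ok (S : CCS Act Const) (b : Proc Act Const) : CanOk S (gOf S b) :=
  ⟨Proc.nil, step_ext_iff.2 (Or.inl Step.one)⟩

lemma gOf_tau_inv {S : CCS Act Const} {b z : Proc Act Const}
    (h : Step S (gOf S b) .tau z) : z = wOf S b := by
  rcases step_ext_iff.1 h with h | h
  · cases h
  · cases h; rfl

lemma gOf_no_act {S : CCS Act Const} {b z : Proc Act Const} {c : Act} :
    ¬ Step S (gOf S b) (.act c) z := by
  intro h
  rcases step_ext_iff.1 h with h | h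
  · cases h
  · cases h

lemma gOf_tau (S : CCS Act Const) (b : Proc Act Const) :
    Step S (gOf S b) .tau (wOf S b) :=
  step_ext_iff.2 (Or.inr (Step.preTau _))

noncomputable def R (S : CCS Act Const) : Proc Act Const → List Act → Proc Act Const
  | _, [] => Proc.nil
  | b, a :: t =>
    Proc.ext (Proc.pre (some (S.co a)) (R S (bigOplus (afterU S b [a])) t))
      (Proc.pre none (gOf S b))

lemma R_noOk (S : CCS Act Const) : ∀ (t : List Act) (b : Proc Act Const), ¬ CanOk S (R S b t) := by
  intro t b ⟨q, hq⟩
  cases t with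
  | nil => exact nil_no_step hq
  | cons a t =>
    rcases step_ext_iff.1 hq with h | h
    · cases h
    · cases h

lemma R_tau_inv {S : CCS Act Const} {b z : Proc Act Const} {a : Act} {t : List Act}
    (h : Step S (R S b (a :: t)) .tau z) : z = gOf S b := by
  rcases step_ext_iff.1 h with h | h
  · cases h
  · cases h; rfl

lemma R_act_inv {S : CCS Act Const} {b z : Proc Act Const} {a c : Act} {t : List Act}
    (h : Step S (R S b (a :: t)) (.act c) z) :
    c = S.co a ∧ z = R S (bigOplus (afterU S b [a])) t := by
  rcases step_ext_iff.1 h with h | h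
  · cases h; exact ⟨rfl, rfl⟩
  · cases h

lemma R_tau (S : CCS Act Const) (b : Proc Act Const) (a : Act) (t : List Act) :
    Step S (R S b (a :: t)) .tau (gOf S b) :=
  step_ext_iff.2 (Or.inr (Step.preTau _))

lemma R_act (S : CCS Act Const) (b : Proc Act Const) (a : Act) (t : List Act) :
    Step S (R S b (a :: t)) (.act (S.co a)) (R S (bigOplus (afterU S b [a])) t) :=
  step_ext_iff.2 (Or.inl (Step.preAct _ _))

lemma R_length {S : CCS Act Const} :
    ∀ (t : List Act) (t' : List Act) (b b' : Proc Act Const),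
      R S b t = R S b' t' → t.length = t'.length := by
  intro t
  induction t with
  | nil =>
    intro t' b b' h
    cases t' with
    | nil => rfl
    | cons a t' =>
      exfalso
      have h' : Proc.sum (fun _ => (none : Option (Proc Act Const)))
          = Proc.sum (fun n => if n = 0 then some (Proc.pre (some (S.co a)) (R S (bigOplus (afterU S b' [a])) t'))
              else if n = 1 then some (Proc.pre none (gOf S b')) else none) := h
      have := congrFun (Proc.sum.inj h') 0
      simp at this
  | cons a t ih =>
    intro t' b b' h
    cases t' with
    | nil =>
      exfalso
      have h' : Proc.sum (fun n => if n = 0 then some (Proc.pre (some (S.co a)) (R S (bigOplus (afterU S b [a])) t))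
              else if n = 1 then some (Proc.pre none (gOf S b)) else none)
          = Proc.sum (fun _ => (none : Option (Proc Act Const))) := h
      have := congrFun (Proc.sum.inj h') 0
      simp at this
    | cons a' t'' =>
      have h2 := ext_inj h
      have hK : R S (bigOplus (afterU S b [a])) t = R S (bigOplus (afterU S b' [a'])) t'' := by
        exact (Proc.pre.inj h2.1).2
      have := ih t'' _ _ hK
      simp [this]

lemma gOf_ne_R {S : CCS Act Const} {b b' : Proc Act Const} {a : Act} {t : List Act} :
    gOf S b ≠ R S b' (a :: t) := by
  intro h
  have h2 := ext_inj h
  exact nomatch h2.1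

end MTPProof
namespace MTPProof
open MTP
open scoped Classical

variable {Act Const : Type}

lemma canOk_nil {S : CCS Act Const} : ¬ CanOk S Proc.nil := fun ⟨_, h⟩ => nil_no_step h

lemma parTau_cases {S : CCS Act Const} {x r : Proc Act Const} {st2 : St Act Const}
    (h : ParTau S (x, r) st2) :
    (∃ x', Step S x .tau x' ∧ st2 = (x', r)) ∨
    (∃ r', Step S r .tau r' ∧ st2 = (x, r')) ∨
    (∃ a x' r', Step S x (.act a) x' ∧ Step S r (.act (S.co a)) r' ∧ st2 = (x', r')) := by
  cases h with
  | left h => exact Or.inl ⟨_, h, rfl⟩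
  | right h => exact Or.inr (Or.inl ⟨_, h, rfl⟩)
  | sync h1 h2 => exact Or.inr (Or.inr ⟨_, _, _, h1, h2, rfl⟩)

lemma pair_eta {x : St Act Const} : x = (x.1, x.2) := rfl

lemma stageCore {S : CCS Act Const} {rr : Proc Act Const} {ρ : ℕ → St Act Const}
    (h0 : (ρ 0).2 = rr) (hM : MaxComp S ρ)
    (hτ : ∃ z, Step S rr .tau z)
    (hkeep : ∀ st z, ParTau S st z → st.2 = rr → z.2 = rr → Step S st.1 .tau z.1)
    (hconv : Conv S (ρ 0).1) :
    ∃ m, (∀ j ≤ m, (ρ j).2 = rr) ∧ (∀ j < m, Step S (ρ j).1 .tau (ρ (j+1)).1) ∧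
      ParTau S (ρ m) (ρ (m+1)) ∧ (ρ (m+1)).2 ≠ rr := by
  have hstep : ∀ k, (ρ k).2 = rr → ParTau S (ρ k) (ρ (k+1)) := by
    intro k hk
    rcases hM k with h | ⟨hs, _⟩
    · exact h
    · exfalso
      apply hs
      obtain ⟨z, hz⟩ := hτ
      refine ⟨((ρ k).1, z), ?_⟩
      have hpr : ρ k = ((ρ k).1, rr) := by rw [← hk]
      rw [hpr]
      exact ParTau.right hz
  by_cases hall : ∀ k, (ρ k).2 = rr
  · exfalso
    apply hconv
    exact ⟨fun k => (ρ k).1, rfl,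
      fun k => hkeep _ _ (hstep k (hall k)) (hall k) (hall (k+1))⟩
  · push_neg at hall
    have hex : ∃ k, ¬ (ρ k).2 = rr := hall
    have hm₀ : ¬ (ρ (Nat.find hex)).2 = rr := Nat.find_spec hex
    have hm₀pos : Nat.find hex ≠ 0 := by
      intro hc; rw [hc] at hm₀; exact hm₀ h0
    obtain ⟨m, hm⟩ : ∃ m, Nat.find hex = m + 1 :=
      ⟨Nat.find hex - 1, (Nat.succ_pred_eq_of_pos (Nat.pos_of_ne_zero hm₀pos)).symm⟩
    have hbelow : ∀ j ≤ m, (ρ j).2 = rr := by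
      intro j hj
      by_contra hc
      have := Nat.find_min' hex hc
      omega
    refine ⟨m, hbelow, ?_, hstep m (hbelow m le_rfl), ?_⟩
    · intro j hj
      exact hkeep _ _ (hstep j (hbelow j hj.le)) (hbelow j hj.le) (hbelow (j+1) hj)
    · rw [← hm]; exact hm₀

lemma chain_weak {S : CCS Act Const} {σ : ℕ → Proc Act Const} {m : ℕ}
    (h : ∀ j < m, Step S (σ j) .tau (σ (j+1))) :
    ∀ j, j ≤ m → Weak S (σ 0) [] (σ j) := by
  intro j
  induction j with
  | zero => intro _; exact Weak.refl _
  | succ j ih =>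
    intro hj
    exact weak_snoc_tau (ih (by omega)) (h j (by omega))

lemma chain_uweak_or {S : CCS Act Const} {σ : ℕ → Proc Act Const} {m : ℕ}
    {b : Proc Act Const}
    (h : ∀ j < m, Step S (σ j) .tau (σ (j+1))) (h0 : UWeak S b [] (σ 0)) :
    ∀ j, j ≤ m → UWeak S b [] (σ j) ∨ ∃ i, i ≤ j ∧ CanOk S (σ i) := by
  intro j
  induction j with
  | zero => intro _; exact Or.inl h0
  | succ j ih =>
    intro hj
    rcases ih (by omega) with hU | ⟨i, hi, hok⟩
    · by_cases hok : CanOk S (σ (j+1))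
      · exact Or.inr ⟨j+1, le_rfl, hok⟩
      · exact Or.inl (uweak_snoc_tau hU (h j (by omega)) hok)
    · exact Or.inr ⟨i, by omega, hok⟩

lemma mustReachU {S : CCS Act Const} {w : Proc Act Const} :
    ∀ {b x : Proc Act Const} {s : List Act}, UWeak S b s x → s = [] → Must S w b →
      ∀ ρ : ℕ → St Act Const, ρ 0 = (x, w) → MaxComp S ρ → ∃ j, CanOk S (ρ j).1 := by
  intro b x s hu
  induction hu with
  | @refl p hn =>
    intro _ hMust ρ h0 hM
    obtain ⟨k, hk⟩ := hMust (fun k => (ρ k).swap) (show (ρ 0).swap = _ by rw [h0]; rfl) (maxComp_swap hM)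
    exact ⟨k, hk⟩
  | @tau p p' qq s hn hstep _ ih =>
    intro hs hMust ρ h0 hM
    refine ih hs ?_ ρ h0 hM
    intro σ hσ0 hσM
    obtain ⟨k, hk⟩ := hMust (consC (w, p) σ) rfl
      (consC_max (by rw [hσ0]; exact ParTau.right hstep) hσM)
    cases k with
    | zero => exact absurd hk hn
    | succ k => exact ⟨k, hk⟩
  | act _ _ _ _ =>
    intro hs
    exact absurd hs (by simp)

lemma run_exists {S : CCS Act Const} :
    ∀ {s : List Act} {q q' : Proc Act Const}, Weak S q s q' →
      ∀ b, ∃ (m : ℕ) (ρ : ℕ → St Act Const),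
        ρ 0 = (q, R S b s) ∧ (∀ k, k < m → ParTau S (ρ k) (ρ (k+1))) ∧
        (∀ k, ¬ CanOk S (ρ k).2) ∧ ρ m = (q', Proc.nil) := by
  intro s q q' h
  induction h with
  | refl p =>
    intro b
    exact ⟨0, fun _ => (p, Proc.nil), rfl, fun k hk => absurd hk (by omega),
      fun k => canOk_nil, rfl⟩
  | @tau p p' qq s hstep _ ih =>
    intro b
    obtain ⟨m, ρ, h1, h2, h3, h4⟩ := ih b
    refine ⟨m+1, consC (p, R S b s) ρ, rfl, ?_, ?_, h4⟩
    · intro k hk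
      cases k with
      | zero =>
        show ParTau S (p, R S b s) (ρ 0)
        rw [h1]; exact ParTau.left hstep
      | succ k => exact h2 k (by omega)
    · intro k
      cases k with
      | zero => exact R_noOk S s b
      | succ k => exact h3 k
  | @act p p' qq a s hstep _ ih =>
    intro b
    obtain ⟨m, ρ, h1, h2, h3, h4⟩ := ih (bigOplus (afterU S b [a]))
    refine ⟨m+1, consC (p, R S b (a :: s)) ρ, rfl, ?_, ?_, h4⟩
    · intro k hk
      cases k with
      | zero =>
        show ParTau S (p, R S b (a :: s)) (ρ 0)
        rw [h1]; exact ParTau.sync hstep (R_act S b a s)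
      | succ k => exact h2 k (by omega)
    · intro k
      cases k with
      | zero => exact R_noOk S (a :: s) b
      | succ k => exact h3 k

lemma run_max {S : CCS Act Const} {s : List Act} {q q' : Proc Act Const}
    (h : Weak S q s q') (b : Proc Act Const) :
    ∃ ρ : ℕ → St Act Const, ρ 0 = (q, R S b s) ∧ MaxComp S ρ ∧ ∀ k, ¬ CanOk S (ρ k).2 := by
  obtain ⟨m, ρ, h1, h2, h3, h4⟩ := run_exists h b
  refine ⟨fun k => if k < m then ρ k else extC S (q', Proc.nil) (k - m), ?_, ?_, ?_⟩
  · by_cases h0 : 0 < m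
    · simp only [if_pos h0]; exact h1
    · have hm : m = 0 := by omega
      simp only [if_neg h0]
      show extC S (q', Proc.nil) (0 - m) = _
      have : 0 - m = 0 := by omega
      rw [this]
      show (q', Proc.nil) = (q, R S b s)
      rw [← h4, hm]; exact h1
  · intro k
    by_cases hk : k < m
    · have hval : (if k + 1 < m then ρ (k+1) else extC S (q', Proc.nil) (k + 1 - m))
          = ρ (k+1) := by
        by_cases hk1 : k + 1 < m
        · rw [if_pos hk1]
        · rw [if_neg hk1]
          have hm1 : k + 1 = m := by omega
          have : k + 1 - m = 0 := by omega
          rw [this]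
          show (q', Proc.nil) = ρ (k+1)
          rw [hm1] at *; exact h4.symm
      simp only [if_pos hk, hval]
      exact Or.inl (h2 k hk)
    · have e1 : (if k < m then ρ k else extC S (q', Proc.nil) (k - m))
          = extC S (q', Proc.nil) (k - m) := if_neg hk
      have e2 : (if k + 1 < m then ρ (k+1) else extC S (q', Proc.nil) (k + 1 - m))
          = extC S (q', Proc.nil) ((k - m) + 1) := by
        rw [if_neg (by omega : ¬ k + 1 < m)]
        congr 1
        omega
      simp only [e1, e2]
      exact extC_max S (q', Proc.nil) (k - m)
  · intro k
    by_cases hk : k < m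
    · simp only [if_pos hk]; exact h3 k
    · simp only [if_neg hk]
      rw [extC_nil]
      exact canOk_nil

end MTPProof
namespace MTPProof
open MTP
open scoped Classical

variable {Act Const : Type}

lemma keep_R {S : CCS Act Const} {b : Proc Act Const} {a : Act} {t : List Act} :
    ∀ st z : St Act Const, ParTau S st z → st.2 = R S b (a :: t) →
      z.2 = R S b (a :: t) → Step S st.1 .tau z.1 := by
  intro st z hpt h2 h3
  have hpt' : ParTau S (st.1, st.2) z := hpt
  rcases parTau_cases hpt' with ⟨x', hx, he⟩ | ⟨r', hr, he⟩ | ⟨a₀, x', r', hx, hr, he⟩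
  · rw [he]; exact hx
  · exfalso
    rw [h2] at hr
    have hg := R_tau_inv hr
    rw [he] at h3
    rw [hg] at h3
    exact gOf_ne_R h3
  · exfalso
    rw [h2] at hr
    have hg := (R_act_inv hr).2
    rw [he] at h3
    rw [hg] at h3
    have := R_length _ _ _ _ h3
    simp at this

lemma keep_g {S : CCS Act Const} {b : Proc Act Const} (hw : wOf S b ≠ gOf S b) :
    ∀ st z : St Act Const, ParTau S st z → st.2 = gOf S b →
      z.2 = gOf S b → Step S st.1 .tau z.1 := by
  intro st z hpt h2 h3
  have hpt' : ParTau S (st.1, st.2) z := hpt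
  rcases parTau_cases hpt' with ⟨x', hx, he⟩ | ⟨r', hr, he⟩ | ⟨a₀, x', r', hx, hr, he⟩
  · rw [he]; exact hx
  · exfalso
    rw [h2] at hr
    have hg := gOf_tau_inv hr
    rw [he] at h3
    rw [hg] at h3
    exact hw h3
  · exfalso
    rw [h2] at hr
    exact gOf_no_act hr

lemma A1 {S : CCS Act Const} :
    ∀ (t : List Act) (c b p' : Proc Act Const) (ρ : ℕ → St Act Const),
      convAlong S c t → Weak S c [] p' → (¬ ∃ z, Weak S p' t z) →
      ρ 0 = (p', R S b t) → MaxComp S ρ → ∃ k, CanOk S (ρ k).2 := by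
  intro t
  induction t with
  | nil =>
    intro c b p' ρ _ _ hNT _ _
    exact absurd ⟨p', Weak.refl p'⟩ hNT
  | cons a t ih =>
    intro c b p' ρ hCA hWc hNT h0 hM
    have hconvp : Conv S p' := conv_weak_nil hWc rfl hCA.1
    obtain ⟨m, hbelow, hchain, hPT, hne⟩ :=
      stageCore (rr := R S b (a :: t)) (by rw [h0]) hM ⟨_, R_tau S b a t⟩ keep_R
        (by rw [h0]; exact hconvp)
    have hσ0 : (ρ 0).1 = p' := by rw [h0]
    have hWm : Weak S p' [] (ρ m).1 := by
      have h' : Weak S (ρ 0).1 [] (ρ m).1 :=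
        chain_weak (σ := fun j => (ρ j).1) hchain m le_rfl
      rw [hσ0] at h'
      exact h'
    have hmrr : ρ m = ((ρ m).1, R S b (a :: t)) := by rw [← hbelow m le_rfl]
    rw [hmrr] at hPT
    rcases parTau_cases hPT with ⟨x', hx, he⟩ | ⟨r', hr, he⟩ | ⟨a₀, x', r', hx, hr, he⟩
    · exact absurd (by rw [he]) hne
    · refine ⟨m+1, ?_⟩
      rw [he]
      show CanOk S r'
      rw [R_tau_inv hr]
      exact gOf_ok S b
    · have ha₀ : a = a₀ := by
        have hc := (R_act_inv hr).1
        rw [← S.co_invol a, ← hc, S.co_invol]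
      rw [← ha₀] at hx
      have hz : r' = R S (bigOplus (afterU S b [a])) t := (R_act_inv hr).2
      have hWax : Weak S p' [a] x' := weak_nil_trans hWm (Weak.act hx (Weak.refl x'))
      have hWcax : Weak S c [a] x' := weak_nil_trans hWc hWax
      have hCA' : convAlong S (bigOplus (after S c [a])) t := hCA.2 ⟨x', hWcax⟩
      have hWc' : Weak S (bigOplus (after S c [a])) [] x' :=
        Weak.tau (bigOplus_tau (after_countable S c [a]) hWcax) (Weak.refl x')
      have hNT' : ¬ ∃ z, Weak S x' t z := fun ⟨z, hzw⟩ =>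
        hNT ⟨z, weak_nil_trans hWm (Weak.act hx hzw)⟩
      obtain ⟨k, hk⟩ := ih (bigOplus (after S c [a])) (bigOplus (afterU S b [a])) x'
        (fun k => ρ (m+1+k)) hCA' hWc' hNT'
        (show ρ (m+1) = _ by rw [he, hz]) (maxComp_shift hM (m+1))
      exact ⟨m+1+k, hk⟩

lemma A2 {S : CCS Act Const} :
    ∀ (t : List Act) (c b p' : Proc Act Const) (ρ : ℕ → St Act Const),
      usbU S b t → convAlong S c t → Weak S c [] p' → UWeak S b [] p' →
      (¬ ∃ z, Weak S p' t z) → ρ 0 = (p', R S b t) → MaxComp S ρ →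
      ∃ l, CanOk S (ρ l).1 := by
  intro t
  induction t with
  | nil =>
    intro c b p' ρ _ _ _ _ hNT _ _
    exact absurd ⟨p', Weak.refl p'⟩ hNT
  | cons a t ih =>
    intro c b p' ρ hU hCA hWc hUb hNT h0 hM
    have hUclt : b ∈ Uclt S := hU.1
    have hconvp : Conv S p' := conv_weak_nil hWc rfl hCA.1
    obtain ⟨m, hbelow, hchain, hPT, hne⟩ :=
      stageCore (rr := R S b (a :: t)) (by rw [h0]) hM ⟨_, R_tau S b a t⟩ keep_R
        (by rw [h0]; exact hconvp)
    have hσ0 : (ρ 0).1 = p' := by rw [h0]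
    have hWm : Weak S p' [] (ρ m).1 := by
      have h' : Weak S (ρ 0).1 [] (ρ m).1 :=
        chain_weak (σ := fun j => (ρ j).1) hchain m le_rfl
      rw [hσ0] at h'
      exact h'
    have hUor := chain_uweak_or (σ := fun j => (ρ j).1) hchain
      (show UWeak S b [] (ρ 0).1 by rw [hσ0]; exact hUb) m le_rfl
    rcases hUor with hUm | ⟨i, _, hok⟩
    swap
    · exact ⟨i, hok⟩
    have hmrr : ρ m = ((ρ m).1, R S b (a :: t)) := by rw [← hbelow m le_rfl]
    rw [hmrr] at hPT
    rcases parTau_cases hPT with ⟨x', hx, he⟩ | ⟨r', hr, he⟩ | ⟨a₀, x', r', hx, hr, he⟩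
    · exact absurd (by rw [he]) hne
    · -- escape to gOf
      have hMust : Must S (wOf S b) b := wOf_spec hUclt
      have hgr : r' = gOf S b := R_tau_inv hr
      have hconv'' : Conv S (ρ m).1 :=
        conv_weak_nil (weak_nil_trans hWc hWm) rfl hCA.1
      by_cases hwg : wOf S b = gOf S b
      · obtain ⟨j, hj⟩ := mustReachU hUm rfl hMust (fun k => ρ (m+1+k))
          (show ρ (m+1) = ((ρ m).1, wOf S b) by rw [he, hgr, ← hwg])
          (maxComp_shift hM (m+1))
        exact ⟨m+1+j, hj⟩
      · obtain ⟨m', hbelow', hchain', hPT', hne'⟩ :=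
          stageCore (rr := gOf S b) (ρ := fun k => ρ (m+1+k))
            (show (ρ (m+1)).2 = gOf S b by rw [he, hgr])
            (maxComp_shift hM (m+1)) ⟨_, gOf_tau S b⟩ (keep_g hwg)
            (show Conv S (ρ (m+1)).1 by rw [he]; exact hconv'')
        have hUor' := chain_uweak_or (σ := fun j => (ρ (m+1+j)).1) hchain'
          (show UWeak S b [] (ρ (m+1+0)).1 by
            show UWeak S b [] (ρ (m+1)).1
            rw [he]; exact hUm) m' le_rfl
        rcases hUor' with hUm' | ⟨i, _, hok⟩
        swap
        · exact ⟨m+1+i, hok⟩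
        have hm'rr : ρ (m+1+m') = ((ρ (m+1+m')).1, gOf S b) := by
          rw [← hbelow' m' le_rfl]
        rw [hm'rr] at hPT'
        rcases parTau_cases hPT' with ⟨x', hx', he'⟩ | ⟨r'', hr', he'⟩ |
          ⟨a₀, x', r'', hx', hr', he'⟩
        · exact absurd (by rw [he']) hne'
        · have hr'' : r'' = wOf S b := gOf_tau_inv hr'
          obtain ⟨j, hj⟩ := mustReachU hUm' rfl hMust (fun k => ρ (m+1+(m'+1+k)))
            (show ρ (m+1+(m'+1)) = ((ρ (m+1+m')).1, wOf S b) by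
              rw [← hr'', ← he'])
            (maxComp_shift (maxComp_shift hM (m+1)) (m'+1))
          exact ⟨m+1+(m'+1+j), hj⟩
        · exact absurd hr' gOf_no_act
    · -- sync
      have ha₀ : a = a₀ := by
        have hc := (R_act_inv hr).1
        rw [← S.co_invol a, ← hc, S.co_invol]
      rw [← ha₀] at hx
      have hz : r' = R S (bigOplus (afterU S b [a])) t := (R_act_inv hr).2
      by_cases hokx : CanOk S x'
      · exact ⟨m+1, by rw [he]; exact hokx⟩
      have hUax : UWeak S b [a] x' := by
        have := uweak_snoc_act hUm hx hokx
        simpa using this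
      have husb' : usbU S (bigOplus (afterU S b [a])) t := hU.2 ⟨x', hUax⟩
      have hUb' : UWeak S (bigOplus (afterU S b [a])) [] x' :=
        UWeak.tau (bigOplus_noOk S _) (bigOplus_tau (afterU_countable S b [a]) hUax)
          (UWeak.refl hokx)
      have hWax : Weak S p' [a] x' := weak_nil_trans hWm (Weak.act hx (Weak.refl x'))
      have hWcax : Weak S c [a] x' := weak_nil_trans hWc hWax
      have hCA' : convAlong S (bigOplus (after S c [a])) t := hCA.2 ⟨x', hWcax⟩
      have hWc' : Weak S (bigOplus (after S c [a])) [] x' :=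
        Weak.tau (bigOplus_tau (after_countable S c [a]) hWcax) (Weak.refl x')
      have hNT' : ¬ ∃ z, Weak S x' t z := fun ⟨z, hzw⟩ =>
        hNT ⟨z, weak_nil_trans hWm (Weak.act hx hzw)⟩
      obtain ⟨k, hk⟩ := ih (bigOplus (after S c [a])) (bigOplus (afterU S b [a])) x'
        (fun k => ρ (m+1+k)) husb' hCA' hWc' hUb' hNT'
        (show ρ (m+1) = _ by rw [he, hz]) (maxComp_shift hM (m+1))
      exact ⟨m+1+k, hk⟩

end MTPProof



/-- Lemma 5.8: the peer preorder reflects finite traces along which the smaller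
peer peer-converges. -/
theorem p2pLe_reflects_traces {Act Const : Type} (S : MTP.CCS Act Const)
    (p q : MTP.Proc Act Const) (s : List Act)
    (hLe : MTP.p2pLe S p q)
    (hConv : MTP.convP S p s)
    (hW : ∃ q', MTP.Weak S q s q') :
    ∃ p', MTP.Weak S p s p' := by
  classical
  by_contra hnp
  obtain ⟨q', hwq⟩ := hW
  have hMSC : MTP.MustSC S p (MTPProof.R S p s) := by
    intro ρ h0 hM
    constructor
    · exact MTPProof.A1 s p p p ρ hConv.1 (MTP.Weak.refl p) hnp h0 hM
    · by_cases hok : MTP.CanOk S p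
      · exact ⟨0, by rw [h0]; exact hok⟩
      · exact MTPProof.A2 s p p p ρ hConv.2 hConv.1 (MTP.Weak.refl p)
          (MTP.UWeak.refl hok) hnp h0 hM
  have hq := hLe _ hMSC
  obtain ⟨ρ, h0, hM, hno⟩ := MTPProof.run_max hwq p
  obtain ⟨k, hk⟩ := (hq ρ h0 hM).1
  exact hno k hk
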